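/- arXiv:1508.00850 — 2 statements merged into one kernel-verified Lean document; each statement's English description precedes it below -/
import Mathlib

section
/- Lemma on locally frustrated configurations (Lemma 'lemmafacile'): Let G = (V,E) be a k-stable d-E graph with distinguished vertex v of even degree d_v as in the k-stability definition. Let F_v = {f_1,…,f_{d_v}} be the edges incident to v, and define interactions J by J_e = -1 for e ∈ {f_1,…,f_{d_v/2}} and J_e = +1 otherwise. Let σ be the configuration with σ_u = +1 for all u ≠ v (σ_v arbitrary). Then for every connected set A with 1 ≤ |A| ≤ k and A ≠ {v}, one has Δ_A H_J(σ) ≥ 2. -/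
open Finset

/-- The Hamiltonian increment `Δ_A H_J(σ)`. -/
def deltaH {V : Type*} [DecidableEq V] (G : SimpleGraph V) [DecidableRel G.Adj]
    [G.LocallyFinite] (J : Sym2 V → ℤ) (σ : V → ℤ) (A : Finset V) : ℤ :=
  2 * ∑ x ∈ A, ∑ y ∈ (G.neighborFinset x).filter (· ∉ A), J s(x, y) * σ x * σ y

/-- The number of edges between `∂A` and `∂^ext A`, i.e. the edge boundary of `A`. -/
def edgeCut {V : Type*} [DecidableEq V] (G : SimpleGraph V) [DecidableRel G.Adj]
    [G.LocallyFinite] (A : Finset V) : ℕ :=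
  ∑ x ∈ A, ((G.neighborFinset x).filter (· ∉ A)).card

/-- `v` belongs to `∂A ∪ ∂^ext A`. -/
def inBdry {V : Type*} (G : SimpleGraph V) (A : Finset V) (v : V) : Prop :=
  (v ∈ A ∧ ∃ u, G.Adj v u ∧ u ∉ A) ∨ (v ∉ A ∧ ∃ u ∈ A, G.Adj v u)

/-- A walk from inside `A` to outside `A` crosses the boundary of `A`. -/
lemma walk_cross {V : Type*} [DecidableEq V] {G : SimpleGraph V} {A : Finset V}
    {u w : V} (p : G.Walk u w) :
    u ∈ A → w ∉ A → ∃ x ∈ A, ∃ y, G.Adj x y ∧ y ∉ A := by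
  induction p with
  | nil => intro hu hw; exact absurd hu hw
  | @cons a b c h p ih =>
    intro hu hw
    by_cases hb : b ∈ A
    · exact ih hb hw
    · exact ⟨a, hu, b, h, hb⟩

/-- Lemma on locally frustrated configurations: on an infinite connected `k`-stable
graph with distinguished vertex `v` of even degree, taking interactions equal to `-1`
on exactly half of the edges incident to `v` (a set `S` of neighbors) and `+1`
elsewhere, and spins `+1` everywhere off `v`, every connected set `A` with
`1 ≤ |A| ≤ k` and `A ≠ {v}` satisfies `Δ_A H_J(σ) ≥ 2`. -/
theorem frustrated_increment_ge_two {V : Type*} [DecidableEq V] [Infinite V]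
    (G : SimpleGraph V) [DecidableRel G.Adj] [G.LocallyFinite] (hGconn : G.Connected)
    (k : ℕ) (v : V)
    (hEven : Even (G.degree v))
    (hdeg3 : ∀ x, G.Adj v x → 3 ≤ G.degree x)
    (hstable : ∀ A : Finset V, (G.induce (A : Set V)).Connected →
      2 ≤ A.card → A.card ≤ k → inBdry G A v → G.degree v < edgeCut G A)
    (S : Finset V) (hS : S ⊆ G.neighborFinset v) (hScard : 2 * S.card = G.degree v)
    (J : Sym2 V → ℤ)
    (hJneg : ∀ u ∈ S, J s(v, u) = -1)
    (hJpos : ∀ x y, G.Adj x y → ¬(x = v ∧ y ∈ S) → ¬(y = v ∧ x ∈ S) → J s(x, y) = 1)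
    (σ : V → ℤ) (hσ : ∀ u, u ≠ v → σ u = 1) (hσv : σ v = 1 ∨ σ v = -1)
    (A : Finset V) (hA : A.Nonempty) (hconn : (G.induce (A : Set V)).Connected)
    (hcard : A.card ≤ k) (hAne : A ≠ {v}) :
    2 ≤ deltaH G J σ A := by
  classical
  set F : V → Finset V := fun x => (G.neighborFinset x).filter (· ∉ A) with hF
  set b : V → V → ℤ :=
    fun x y => if (x = v ∨ y = v) ∧ J s(x, y) ≠ σ v then 1 else 0 with hb
  set T : ℤ := ∑ x ∈ A, ∑ y ∈ F x, J s(x, y) * σ x * σ y with hT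
  set C : ℤ := ∑ x ∈ A, ∑ y ∈ F x, b x y with hC
  -- basic facts
  have hσv2 : σ v * σ v = 1 := by rcases hσv with h | h <;> rw [h] <;> ring
  have hJval : ∀ x y : V, G.Adj x y → J s(x, y) = 1 ∨ J s(x, y) = -1 := by
    intro x y hadj
    by_cases h1 : x = v ∧ y ∈ S
    · right; rw [h1.1]; exact hJneg y h1.2
    · by_cases h2 : y = v ∧ x ∈ S
      · right; rw [h2.1, Sym2.eq_swap]; exact hJneg x h2.2
      · left; exact hJpos x y hadj h1 h2
  have hmemF : ∀ x y : V, y ∈ F x → G.Adj x y ∧ y ∉ A := by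
    intro x y hy
    rw [hF] at hy
    simp only [Finset.mem_filter, SimpleGraph.mem_neighborFinset] at hy
    exact hy
  -- termwise lower bound
  have key : ∀ x ∈ A, ∀ y ∈ F x, 1 - 2 * b x y ≤ J s(x, y) * σ x * σ y := by
    intro x hx y hy
    obtain ⟨hadj, hyA⟩ := hmemF x y hy
    have hσval : ∀ z : V, σ z = 1 ∨ σ z = -1 := by
      intro z; by_cases hz : z = v
      · rw [hz]; exact hσv
      · left; exact hσ z hz
    simp only [hb]
    by_cases hcond : (x = v ∨ y = v) ∧ J s(x, y) ≠ σ v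
    · rw [if_pos hcond]
      have : J s(x, y) * σ x * σ y = 1 ∨ J s(x, y) * σ x * σ y = -1 := by
        rcases hJval x y hadj with h1 | h1 <;> rcases hσval x with h2 | h2 <;>
          rcases hσval y with h3 | h3 <;> rw [h1, h2, h3] <;> norm_num
      rcases this with h | h <;> rw [h] <;> norm_num
    · rw [if_neg hcond]
      push_neg at hcond
      by_cases hxv : x = v
      · subst hxv
        have hJσ : J s(x, y) = σ x := hcond (Or.inl rfl)
        have hyv : y ≠ x := hadj.ne'
        rw [hJσ, hσ y hyv, mul_one, hσv2]
        norm_num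
      · by_cases hyv : y = v
        · subst hyv
          have hJσ : J s(x, y) = σ y := hcond (Or.inr rfl)
          rw [hJσ, hσ x hxv, mul_one, hσv2]
          norm_num
        · rw [hJpos x y hadj (fun h => hxv h.1) (fun h => hyv h.1),
            hσ x hxv, hσ y hyv]
          norm_num
  -- summed lower bound : edgeCut - 2*C ≤ T
  have hEC : (edgeCut G A : ℤ) = ∑ x ∈ A, ∑ y ∈ F x, (1 : ℤ) := by
    rw [edgeCut]
    push_cast
    simp [hF]
  have hsum : (edgeCut G A : ℤ) - 2 * C ≤ T := by
    have h1 : (edgeCut G A : ℤ) - 2 * C = ∑ x ∈ A, ∑ y ∈ F x, (1 - 2 * b x y) := by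
      rw [hEC, hC, Finset.mul_sum, ← Finset.sum_sub_distrib]
      refine Finset.sum_congr rfl fun x hx => ?_
      rw [Finset.mul_sum, ← Finset.sum_sub_distrib]
    rw [h1, hT]
    exact Finset.sum_le_sum fun x hx => Finset.sum_le_sum fun y hy => key x hx y hy
  -- C is nonnegative
  have hCnn : 0 ≤ C := by
    rw [hC]
    refine Finset.sum_nonneg fun x _ => Finset.sum_nonneg fun y _ => ?_
    simp only [hb]; split <;> norm_num
  -- C ≤ |S|
  have hNle : (((G.neighborFinset v).filter (fun u => J s(v, u) ≠ σ v)).card : ℤ)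
      ≤ (S.card : ℤ) := by
    rcases hσv with h1 | h1
    · have hsub : (G.neighborFinset v).filter (fun u => J s(v, u) ≠ σ v) ⊆ S := by
        intro u hu
        simp only [Finset.mem_filter] at hu
        by_contra huS
        have hadj : G.Adj v u := (SimpleGraph.mem_neighborFinset G v u).mp hu.1
        have : J s(v, u) = 1 := hJpos v u hadj (fun h => huS h.2)
          (fun h => (hadj.ne' h.1).elim)
        exact hu.2 (by rw [this, h1])
      exact_mod_cast Finset.card_le_card hsub
    · have hsub : (G.neighborFinset v).filter (fun u => J s(v, u) ≠ σ v)
          ⊆ G.neighborFinset v \ S := by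
        intro u hu
        simp only [Finset.mem_filter] at hu
        rw [Finset.mem_sdiff]
        refine ⟨hu.1, fun huS => ?_⟩
        exact hu.2 (by rw [hJneg u huS, h1])
      have h2 : ((G.neighborFinset v).filter (fun u => J s(v, u) ≠ σ v)).card
          ≤ (G.neighborFinset v).card - S.card := by
        calc _ ≤ (G.neighborFinset v \ S).card := Finset.card_le_card hsub
        _ = (G.neighborFinset v).card - S.card := Finset.card_sdiff_of_subset hS
      have h3 : (G.neighborFinset v).card = G.degree v := G.card_neighborFinset_eq_degree v
      have h4 : ((G.neighborFinset v).filter (fun u => J s(v, u) ≠ σ v)).card ≤ S.card := by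
        omega
      exact_mod_cast h4
  have hCleS : C ≤ (S.card : ℤ) := by
    refine le_trans ?_ hNle
    by_cases hvA : v ∈ A
    · have hCeq : C = ∑ y ∈ F v, b v y := by
        rw [hC]
        refine Finset.sum_eq_single_of_mem v hvA fun x hx hxv => ?_
        refine Finset.sum_eq_zero fun y hy => ?_
        obtain ⟨hadj, hyA⟩ := hmemF x y hy
        have hyv : y ≠ v := fun h => hyA (h ▸ hvA)
        simp only [hb]
        simp [hxv, hyv]
      rw [hCeq]
      have h1 : ∑ y ∈ F v, b v y
          = ∑ y ∈ F v, (if J s(v, y) ≠ σ v then (1:ℤ) else 0) := by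
        refine Finset.sum_congr rfl fun y hy => ?_
        simp only [hb]; simp
      rw [h1, Finset.sum_boole]
      have hsub : (F v).filter (fun y => J s(v, y) ≠ σ v)
          ⊆ (G.neighborFinset v).filter (fun u => J s(v, u) ≠ σ v) := by
        refine Finset.filter_subset_filter _ ?_
        rw [hF]; exact Finset.filter_subset _ _
      exact_mod_cast Finset.card_le_card hsub
    · have hCeq : C = ∑ x ∈ A, (if v ∈ F x ∧ J s(x, v) ≠ σ v then (1:ℤ) else 0) := by
        rw [hC]
        refine Finset.sum_congr rfl fun x hx => ?_
        have hxv : x ≠ v := fun h => hvA (h ▸ hx)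
        have h1 : ∀ y ∈ F x, b x y
            = if y = v then (if J s(x, y) ≠ σ v then (1:ℤ) else 0) else 0 := by
          intro y hy
          simp only [hb]
          by_cases hyv : y = v <;> simp [hyv, hxv]
        rw [Finset.sum_congr rfl h1, Finset.sum_ite_eq' (F x) v]
        by_cases hvF : v ∈ F x <;> simp [hvF]
      rw [hCeq]
      have h2 : ∑ x ∈ A, (if v ∈ F x ∧ J s(x, v) ≠ σ v then (1:ℤ) else 0)
          = ((A.filter (fun x => v ∈ F x ∧ J s(x, v) ≠ σ v)).card : ℤ) :=
        Finset.sum_boole ..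
      rw [h2]
      have hinj : (A.filter (fun x => v ∈ F x ∧ J s(x, v) ≠ σ v)).card
          ≤ ((G.neighborFinset v).filter (fun u => J s(v, u) ≠ σ v)).card := by
        refine Finset.card_le_card_of_injOn (fun x => x) ?_ (Set.injOn_id _)
        intro x hx
        change x ∈ A.filter (fun x => v ∈ F x ∧ J s(x, v) ≠ σ v) at hx
        change x ∈ (G.neighborFinset v).filter (fun u => J s(v, u) ≠ σ v)
        simp only [Finset.mem_filter] at hx ⊢
        obtain ⟨hxA, hvF, hJ⟩ := hx
        obtain ⟨hadj, _⟩ := hmemF x v hvF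
        refine ⟨(SimpleGraph.mem_neighborFinset G v x).mpr hadj.symm, ?_⟩
        rwa [Sym2.eq_swap]
      exact_mod_cast hinj
  -- final goal reduces to 1 ≤ T
  suffices hfin : 1 ≤ T by
    rw [deltaH]
    rw [hT] at hfin
    linarith
  by_cases hCz : C = 0
  · -- no frustrated cut edge: T ≥ edgeCut ≥ 1
    have hEC1 : 1 ≤ edgeCut G A := by
      obtain ⟨u, hu⟩ := hA
      obtain ⟨w, hw⟩ := Infinite.exists_notMem_finset A
      obtain ⟨p⟩ := hGconn.preconnected u w
      obtain ⟨x, hxA, y, hadj, hyA⟩ := walk_cross p hu hw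
      have hyF : y ∈ F x := by
        rw [hF]
        simp only [Finset.mem_filter, SimpleGraph.mem_neighborFinset]
        exact ⟨hadj, hyA⟩
      calc 1 ≤ (F x).card := Finset.card_pos.mpr ⟨y, hyF⟩
      _ ≤ edgeCut G A := by
        rw [edgeCut]
        exact Finset.single_le_sum
          (f := fun x => ((G.neighborFinset x).filter (· ∉ A)).card)
          (fun i _ => Nat.zero_le _) hxA
    have : (1 : ℤ) ≤ (edgeCut G A : ℤ) := by exact_mod_cast hEC1
    linarith [hsum, hCz.symm ▸ hsum]
  · -- there is a frustrated cut edge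
    obtain ⟨x, hxA, hx⟩ := Finset.exists_ne_zero_of_sum_ne_zero (hC ▸ hCz)
    obtain ⟨y, hyF, hy⟩ := Finset.exists_ne_zero_of_sum_ne_zero hx
    have hcond : (x = v ∨ y = v) ∧ J s(x, y) ≠ σ v := by
      by_contra hc
      simp only [hb, if_neg hc] at hy
      exact hy rfl
    obtain ⟨hadj, hyA⟩ := hmemF x y hyF
    by_cases h2 : 2 ≤ A.card
    · -- use stability
      have hbd : inBdry G A v := by
        rcases hcond.1 with hx1 | hy1
        · subst hx1
          exact Or.inl ⟨hxA, y, hadj, hyA⟩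
        · subst hy1
          exact Or.inr ⟨hyA, x, hxA, hadj.symm⟩
      have hcut := hstable A hconn h2 hcard hbd
      have hcut' : (G.degree v : ℤ) < (edgeCut G A : ℤ) := by exact_mod_cast hcut
      have hSc : (2 : ℤ) * (S.card : ℤ) = (G.degree v : ℤ) := by exact_mod_cast hScard
      linarith
    · -- |A| = 1
      have h1 : A.card = 1 := by
        have := Finset.card_pos.mpr hA
        omega
      obtain ⟨u, hAu⟩ := Finset.card_eq_one.mp h1
      subst hAu
      have hxu : x = u := Finset.mem_singleton.mp hxA
      subst hxu
      have huv : x ≠ v := fun h => hAne (by rw [h])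
      have hyv : y = v := by
        rcases hcond.1 with h | h
        · exact absurd h huv
        · exact h
      -- edgeCut = degree x ≥ 3
      have hECeq : edgeCut G {x} = G.degree x := by
        have hfe : (G.neighborFinset x).filter (· ∉ ({x} : Finset V)) = G.neighborFinset x :=
          Finset.filter_eq_self.mpr fun z hz => by
            simp only [Finset.mem_singleton]
            exact ((SimpleGraph.mem_neighborFinset G x z).mp hz).ne'
        rw [edgeCut, Finset.sum_singleton, hfe, G.card_neighborFinset_eq_degree]
      have hdx : 3 ≤ G.degree x := by
        rw [hyv] at hadj
        exact hdeg3 x hadj.symm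
      -- C ≤ 1
      have hCle1 : C ≤ 1 := by
        have hCeq : C = ∑ z ∈ F x, b x z := by rw [hC, Finset.sum_singleton]
        have hle : ∀ z ∈ F x, b x z ≤ if z = v then (1:ℤ) else 0 := by
          intro z hz
          simp only [hb]
          by_cases hzv : z = v
          · simp only [hzv, if_pos rfl]
            split <;> norm_num
          · simp [hzv, huv]
        calc C ≤ ∑ z ∈ F x, (if z = v then (1:ℤ) else 0) := by
              rw [hCeq]; exact Finset.sum_le_sum hle
        _ = if v ∈ F x then (1:ℤ) else 0 := by
              rw [Finset.sum_ite_eq' (F x) v (fun _ => (1:ℤ))]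
        _ ≤ 1 := by split <;> norm_num
      have hEC3 : (3 : ℤ) ≤ (edgeCut G {x} : ℤ) := by
        rw [hECeq]; exact_mod_cast hdx
      linarith
end

section
/- The cubic lattice 𝕃_d = (ℤ^d, 𝔼_d) with d ≥ 2 is k-stable for every k ∈ ℕ: for any vertex v (which has even degree 2d), every neighbor of v has degree 2d ≥ 3, and every connected set A with 2 ≤ |A| ≤ k and v ∈ ∂A ∪ ∂^ext A has strictly more than 2d edges between ∂A and ∂^ext A. -/
open Finset

/-- The cubic lattice `𝕃_d = (ℤ^d, 𝔼_d)`. -/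
def latticeGraph (d : ℕ) : SimpleGraph (Fin d → ℤ) where
  Adj x y := (∑ i, |x i - y i|) = 1
  symm := by
    constructor
    intro x y h
    simpa only [abs_sub_comm] using h
  loopless := by
    constructor
    intro x h
    simp at h

/-- The edge boundary count of a finite `A ⊆ ℤ^d`: edges from `A` to its complement,
each counted once. -/
def latticeCutCount (d : ℕ) (A : Finset (Fin d → ℤ)) : ℕ :=
  ∑ x ∈ A, ∑ i : Fin d,
    ((if x + Pi.single i 1 ∉ A then 1 else 0) + (if x - Pi.single i 1 ∉ A then 1 else 0))

/-- `v` belongs to `∂A ∪ ∂^ext A` in `𝕃_d`. -/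
def latticeInBdry (d : ℕ) (A : Finset (Fin d → ℤ)) (v : Fin d → ℤ) : Prop :=
  (v ∈ A ∧ ∃ u, (latticeGraph d).Adj v u ∧ u ∉ A) ∨
  (v ∉ A ∧ ∃ u ∈ A, (latticeGraph d).Adj v u)

lemma lattice_adj_iff (d : ℕ) (v y : Fin d → ℤ) :
    (latticeGraph d).Adj v y ↔
      ∃ i : Fin d, y = v + Pi.single i 1 ∨ y = v - Pi.single i 1 := by
  constructor
  · intro h
    change (∑ i, |v i - y i|) = 1 at h
    have hnn : ∀ j ∈ Finset.univ, (0:ℤ) ≤ |v j - y j| := fun j _ => abs_nonneg _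
    obtain ⟨i, hi⟩ : ∃ i, v i ≠ y i := by
      by_contra hc
      push_neg at hc
      simp [hc] at h
    have h1 : (1:ℤ) ≤ |v i - y i| := Int.one_le_abs (sub_ne_zero.mpr hi)
    have hsplit : |v i - y i| + ∑ j ∈ Finset.univ.erase i, |v j - y j| = 1 :=
      (Finset.add_sum_erase Finset.univ (fun j => |v j - y j|) (Finset.mem_univ i)).trans h
    have hrest : ∑ j ∈ Finset.univ.erase i, |v j - y j| = 0 := by
      have h0 : (0:ℤ) ≤ ∑ j ∈ Finset.univ.erase i, |v j - y j| :=
        Finset.sum_nonneg fun j _ => abs_nonneg _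
      omega
    have habs : |v i - y i| = 1 := by omega
    have hrest' : ∀ j, j ≠ i → v j = y j := by
      intro j hj
      have := (Finset.sum_eq_zero_iff_of_nonneg
        (fun j _ => abs_nonneg (v j - y j))).mp hrest j
        (Finset.mem_erase.mpr ⟨hj, Finset.mem_univ j⟩)
      have := abs_eq_zero.mp this
      omega
    rcases abs_eq (by norm_num : (0:ℤ) ≤ 1) |>.mp habs with hc | hc
    · refine ⟨i, Or.inr ?_⟩
      funext j
      by_cases hj : j = i
      · subst hj; simp; omega
      · simp [Pi.single_apply, hj, hrest' j hj]
    · refine ⟨i, Or.inl ?_⟩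
      funext j
      by_cases hj : j = i
      · subst hj; simp; omega
      · simp [Pi.single_apply, hj, hrest' j hj]
  · rintro ⟨i, h | h⟩ <;>
    · change (∑ j, |v j - y j|) = 1
      have hterm : ∀ j, |v j - y j| = if j = i then 1 else 0 := by
        intro j
        by_cases hj : j = i <;> simp [h, hj, Pi.single_apply]
      simp [hterm]

lemma lattice_degree (d : ℕ) (v : Fin d → ℤ) :
    Set.ncard {y | (latticeGraph d).Adj v y} = 2 * d := by
  classical
  set f : Fin d × Bool → (Fin d → ℤ) :=
    fun p => if p.2 then v + Pi.single p.1 1 else v - Pi.single p.1 1 with hf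
  have hset : {y | (latticeGraph d).Adj v y} = ↑(Finset.univ.image f) := by
    ext y
    simp only [Set.mem_setOf_eq, Finset.coe_image, Set.mem_image, Finset.mem_coe,
      lattice_adj_iff]
    constructor
    · rintro ⟨i, h | h⟩
      · exact ⟨(i, true), by simp, by simp [hf, h]⟩
      · exact ⟨(i, false), by simp, by simp [hf, h]⟩
    · rintro ⟨⟨i, b⟩, -, h⟩
      cases b
      · exact ⟨i, Or.inr (by rw [← h]; simp [hf])⟩
      · exact ⟨i, Or.inl (by rw [← h]; simp [hf])⟩
  have hinj : Function.Injective f := by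
    rintro ⟨i, b⟩ ⟨j, c⟩ h
    have hii := congrFun h i
    have hij : i = j := by
      by_contra hij
      cases b <;> cases c <;>
        simp only [hf, Bool.false_eq_true, if_false, if_true, Pi.add_apply, Pi.sub_apply,
          Pi.single_apply, if_pos rfl, if_neg (Ne.symm hij)] at hii <;> omega
    subst hij
    have hbc : b = c := by
      cases b <;> cases c <;> first
        | rfl
        | (simp only [hf, Bool.false_eq_true, if_false, if_true, Pi.add_apply, Pi.sub_apply,
            Pi.single_eq_same] at hii; omega)
    rw [hbc]
  rw [hset, Set.ncard_coe_finset, Finset.card_image_of_injective _ hinj]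
  simp [Fintype.card_prod, mul_comm]

lemma update_add_single (d : ℕ) (x : Fin d → ℤ) (i : Fin d) :
    Function.update (x + Pi.single i 1) i 0 = Function.update x i 0 := by
  funext j
  by_cases hj : j = i
  · subst hj; simp
  · simp [Function.update_apply, hj, Pi.single_apply]

lemma update_sub_single (d : ℕ) (x : Fin d → ℤ) (i : Fin d) :
    Function.update (x - Pi.single i 1) i 0 = Function.update x i 0 := by
  funext j
  by_cases hj : j = i
  · subst hj; simp
  · simp [Function.update_apply, hj, Pi.single_apply]

/-- The cubic lattice `𝕃_d` with `d ≥ 2` is `k`-stable for every `k` (at every vertex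
`v`): `v` has even degree `2d`, every neighbor of `v` has degree `2d ≥ 3`, and every
connected set `A` with `2 ≤ |A| ≤ k` and `v ∈ ∂A ∪ ∂^ext A` has edge boundary strictly
larger than `2d`. -/
theorem lattice_kStable (d k : ℕ) (hd : 2 ≤ d) (v : Fin d → ℤ) :
    Set.ncard {y | (latticeGraph d).Adj v y} = 2 * d ∧
    Even (Set.ncard {y | (latticeGraph d).Adj v y}) ∧
    (∀ x, (latticeGraph d).Adj v x → 3 ≤ Set.ncard {y | (latticeGraph d).Adj x y}) ∧
    ∀ A : Finset (Fin d → ℤ), ((latticeGraph d).induce (A : Set (Fin d → ℤ))).Connected →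
      2 ≤ A.card → A.card ≤ k → latticeInBdry d A v →
      2 * d < latticeCutCount d A := by
  classical
  refine ⟨lattice_degree d v, by rw [lattice_degree d v]; exact even_two_mul d,
    fun x _ => by rw [lattice_degree d x]; omega, ?_⟩
  intro A _ hA2 _ _
  set proj : Fin d → (Fin d → ℤ) → (Fin d → ℤ) :=
    fun i x => Function.update x i 0 with hproj
  -- fiberwise bound
  have hfiber : ∀ (i : Fin d) (b : Fin d → ℤ), b ∈ A.image (proj i) →
      2 ≤ ∑ x ∈ A.filter (fun x => proj i x = b),
        ((if x + Pi.single i 1 ∉ A then 1 else 0) +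
         (if x - Pi.single i 1 ∉ A then 1 else 0)) := by
    intro i b hb
    set F := A.filter (fun x => proj i x = b) with hF
    have hFne : F.Nonempty := by
      obtain ⟨x, hx, hxb⟩ := Finset.mem_image.mp hb
      exact ⟨x, Finset.mem_filter.mpr ⟨hx, hxb⟩⟩
    obtain ⟨xmax, hxmaxF, hmax⟩ := F.exists_max_image (fun x => x i) hFne
    obtain ⟨xmin, hxminF, hmin⟩ := F.exists_min_image (fun x => x i) hFne
    have hxmaxA : xmax ∈ A := (Finset.mem_filter.mp hxmaxF).1
    have hxminA : xmin ∈ A := (Finset.mem_filter.mp hxminF).1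
    have hmaxout : xmax + Pi.single i 1 ∉ A := by
      intro hin
      have hproj' : proj i (xmax + Pi.single i 1) = b := by
        rw [hproj]; simp only
        rw [update_add_single]
        exact (Finset.mem_filter.mp hxmaxF).2
      have hmem : xmax + Pi.single i 1 ∈ F := Finset.mem_filter.mpr ⟨hin, hproj'⟩
      have := hmax _ hmem
      simp at this
    have hminout : xmin - Pi.single i 1 ∉ A := by
      intro hin
      have hproj' : proj i (xmin - Pi.single i 1) = b := by
        rw [hproj]; simp only
        rw [update_sub_single]
        exact (Finset.mem_filter.mp hxminF).2
      have hmem : xmin - Pi.single i 1 ∈ F := Finset.mem_filter.mpr ⟨hin, hproj'⟩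
      have := hmin _ hmem
      simp at this
    have h1 : 1 ≤ ∑ x ∈ F, (if x + Pi.single i 1 ∉ A then 1 else 0) := by
      have : (if xmax + Pi.single i 1 ∉ A then 1 else 0) = 1 := by simp [hmaxout]
      calc 1 = (if xmax + Pi.single i 1 ∉ A then 1 else 0) := this.symm
        _ ≤ _ := Finset.single_le_sum (f := fun x => if x + Pi.single i 1 ∉ A then 1 else 0)
            (fun _ _ => Nat.zero_le _) hxmaxF
    have h2 : 1 ≤ ∑ x ∈ F, (if x - Pi.single i 1 ∉ A then 1 else 0) := by
      have : (if xmin - Pi.single i 1 ∉ A then 1 else 0) = 1 := by simp [hminout]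
      calc 1 = (if xmin - Pi.single i 1 ∉ A then 1 else 0) := this.symm
        _ ≤ _ := Finset.single_le_sum (f := fun x => if x - Pi.single i 1 ∉ A then 1 else 0)
            (fun _ _ => Nat.zero_le _) hxminF
    calc 2 ≤ (∑ x ∈ F, (if x + Pi.single i 1 ∉ A then 1 else 0)) +
            (∑ x ∈ F, (if x - Pi.single i 1 ∉ A then 1 else 0)) := by omega
      _ = _ := (Finset.sum_add_distrib).symm
  -- per-direction bound
  have hdir : ∀ i : Fin d,
      2 * (A.image (proj i)).card ≤ ∑ x ∈ A,
        ((if x + Pi.single i 1 ∉ A then 1 else 0) +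
         (if x - Pi.single i 1 ∉ A then 1 else 0)) := by
    intro i
    have hmap : ∀ x ∈ A, proj i x ∈ A.image (proj i) := fun x hx =>
      Finset.mem_image_of_mem _ hx
    rw [← Finset.sum_fiberwise_of_maps_to hmap]
    calc 2 * (A.image (proj i)).card = ∑ _b ∈ A.image (proj i), 2 := by
          rw [Finset.sum_const]; ring
      _ ≤ _ := Finset.sum_le_sum (hfiber i)
  -- sum of image cards exceeds d
  have hAne : A.Nonempty := Finset.card_pos.mp (by omega)
  obtain ⟨x, hx, y, hy, hxy⟩ := Finset.one_lt_card.mp (by omega : 1 < A.card)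
  obtain ⟨j, hj⟩ : ∃ j, x j ≠ y j := by
    by_contra hc
    push_neg at hc
    exact hxy (funext hc)
  haveI : Nontrivial (Fin d) := ⟨⟨⟨0, by omega⟩, ⟨1, by omega⟩, by simp [Fin.ext_iff]⟩⟩
  obtain ⟨i0, hi0⟩ := exists_ne j
  have himg : ∀ i : Fin d, 1 ≤ (A.image (proj i)).card := fun i =>
    Finset.card_pos.mpr (hAne.image _)
  have himg2 : 1 < (A.image (proj i0)).card := by
    apply Finset.one_lt_card.mpr
    refine ⟨proj i0 x, Finset.mem_image_of_mem _ hx, proj i0 y,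
      Finset.mem_image_of_mem _ hy, ?_⟩
    intro hcon
    have := congrFun hcon j
    simp only [hproj, Function.update_apply] at this
    rw [if_neg (Ne.symm hi0), if_neg (Ne.symm hi0)] at this
    exact hj this
  have hsumcards : d < ∑ i : Fin d, (A.image (proj i)).card := by
    have : ∑ _i : Fin d, 1 < ∑ i : Fin d, (A.image (proj i)).card :=
      Finset.sum_lt_sum (fun i _ => himg i) ⟨i0, Finset.mem_univ i0, himg2⟩
    simpa using this
  -- combine
  have hcut : latticeCutCount d A = ∑ i : Fin d, ∑ x ∈ A,
      ((if x + Pi.single i 1 ∉ A then 1 else 0) +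
       (if x - Pi.single i 1 ∉ A then 1 else 0)) := by
    rw [latticeCutCount, Finset.sum_comm]
  calc 2 * d < 2 * ∑ i : Fin d, (A.image (proj i)).card := by omega
    _ = ∑ i : Fin d, 2 * (A.image (proj i)).card := by rw [Finset.mul_sum]
    _ ≤ _ := by rw [hcut]; exact Finset.sum_le_sum (fun i _ => hdir i)
end
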